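/- For every t > 0, the rescaled discrete theta function converges to the continuous one: lim_{n→∞} θ^{G_n}(n² t) = θ^∞(t). -/

import Mathlib

open Real Filter MeasureTheory

/-! ### Auxiliary lemmas -/

private lemma summable_exp_neg_mul_sq {c : ℝ} (hc : 0 < c) :
    Summable fun k : ℤ => Real.exp (-c * (k : ℝ) ^ 2) := by
  have h := summable_pow_mul_jacobiTheta₂_term_bound 0 (T := c / π) (by positivity) 0
  refine h.congr fun k => ?_
  rw [pow_zero, one_mul]
  congr 1
  have hπ : (π : ℝ) ≠ 0 := Real.pi_ne_zero
  field_simp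
  ring

/-- Jordan-type inequality: `2 * min y (1-y) ≤ sin (π y)` for `y ∈ [0,1]`. -/
private lemma two_mul_min_le_sin {y : ℝ} (h0 : 0 ≤ y) (h1 : y ≤ 1) :
    2 * min y (1 - y) ≤ Real.sin (π * y) := by
  have hπ := Real.pi_pos
  rcases le_or_gt y (1 / 2) with hy | hy
  · rw [min_eq_left (by linarith)]
    have h := Real.mul_le_sin (x := π * y) (by positivity) (by nlinarith)
    calc 2 * y = 2 / π * (π * y) := by field_simp
      _ ≤ Real.sin (π * y) := h
  · rw [min_eq_right (by linarith)]
    have h := Real.mul_le_sin (x := π * (1 - y)) (by nlinarith) (by nlinarith)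
    have hs : Real.sin (π * (1 - y)) = Real.sin (π * y) := by
      rw [show π * (1 - y) = π - π * y by ring, Real.sin_pi_sub]
    calc 2 * (1 - y) = 2 / π * (π * (1 - y)) := by field_simp
      _ ≤ Real.sin (π * (1 - y)) := h
      _ = Real.sin (π * y) := hs

/-- Squeeze lower bound for `sin x ^ 2` when `|x| ≤ 1`. -/
private lemma sq_sin_lower {x : ℝ} (h : |x| ≤ 1) :
    (|x| * (1 - x ^ 2 / 4)) ^ 2 ≤ Real.sin x ^ 2 := by
  have hsq : Real.sin x ^ 2 = Real.sin |x| ^ 2 := by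
    rcases abs_cases x with ⟨h1, _⟩ | ⟨h1, _⟩ <;> rw [h1]
    simp [Real.sin_neg]
  rw [hsq]
  rcases eq_or_lt_of_le (abs_nonneg x) with h0 | h0
  · rw [← h0]; simp
  · have hlow : |x| - |x| ^ 3 / 4 < Real.sin |x| := by
      have := Real.sin_gt_sub_cube h0; nlinarith [pow_nonneg (abs_nonneg x) 3]
    have h2 : x ^ 2 = |x| ^ 2 := (sq_abs x).symm
    have h1' : |x| * (1 - x ^ 2 / 4) = |x| - |x| ^ 3 / 4 := by rw [h2]; ring
    have h3 : |x| ^ 3 ≤ |x| := by nlinarith [abs_nonneg x]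
    have hnn : 0 ≤ |x| - |x| ^ 3 / 4 := by linarith
    rw [h1']
    exact pow_le_pow_left₀ hnn hlow.le 2

/-- Key lower bound for `sin²` on the window, used for domination. -/
private lemma sin_sq_window_bound (a : ℕ) (k : ℤ) (lam : ℝ) (hlam : lam ∈ Set.Ico (0 : ℝ) 1)
    (hk : k ∈ Finset.Ico (-((a / 2 : ℕ) : ℤ)) ((a - a / 2 : ℕ) : ℤ)) (hk1 : 1 ≤ k.natAbs) :
    4 * ((k.natAbs : ℝ) - 1) ^ 2 / (a : ℝ) ^ 2 ≤ Real.sin (π * ((k : ℝ) + lam) / (a : ℝ)) ^ 2 := by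
  simp only [Finset.mem_Ico] at hk
  have ha0 : 0 < a := by omega
  have haR : (0 : ℝ) < (a : ℝ) := by exact_mod_cast ha0
  obtain ⟨hl0, hl1⟩ := hlam
  have habs : (k.natAbs : ℝ) = |(k : ℝ)| := by
    rw [Nat.cast_natAbs, Int.cast_abs]
  rcases le_or_gt 1 k with hk' | hk'
  · -- positive k
    have hmk : (k.natAbs : ℝ) = (k : ℝ) := by
      rw [habs, abs_of_pos (by exact_mod_cast hk')]
    have hkR : (1 : ℝ) ≤ (k : ℝ) := by exact_mod_cast hk'
    set y : ℝ := ((k : ℝ) + lam) / a with hy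
    have hy0 : 0 ≤ y := by apply div_nonneg (by linarith) haR.le
    have hk2 : (k : ℝ) + 1 ≤ (a : ℝ) := by exact_mod_cast (by omega : k + 1 ≤ (a : ℤ))
    have hk3 : 2 * (k : ℝ) + 1 ≤ (a : ℝ) := by exact_mod_cast (by omega : 2 * k + 1 ≤ (a : ℤ))
    have hy1 : y ≤ 1 := by rw [hy, div_le_one haR]; linarith
    have hj := two_mul_min_le_sin hy0 hy1
    have hmin : ((k : ℝ) - 1) / a ≤ min y (1 - y) := by
      refine le_min ?_ ?_
      · rw [hy]; exact div_le_div_of_nonneg_right (by linarith) haR.le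
      · have h1y : 1 - y = ((a : ℝ) - ((k : ℝ) + lam)) / a := by
          rw [hy]; field_simp
        rw [h1y]; exact div_le_div_of_nonneg_right (by linarith) haR.le
    have h2 : 2 * (((k : ℝ) - 1) / a) ≤ Real.sin (π * y) := by
      calc 2 * (((k : ℝ) - 1) / a) ≤ 2 * min y (1 - y) := by linarith
        _ ≤ Real.sin (π * y) := hj
    have hnn : 0 ≤ 2 * (((k : ℝ) - 1) / a) := by
      apply mul_nonneg (by norm_num) (div_nonneg (by linarith) haR.le)
    have harg : π * ((k : ℝ) + lam) / (a : ℝ) = π * y := by rw [hy]; ring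
    rw [harg, hmk]
    calc 4 * ((k : ℝ) - 1) ^ 2 / (a : ℝ) ^ 2 = (2 * (((k : ℝ) - 1) / a)) ^ 2 := by
          field_simp; ring
      _ ≤ Real.sin (π * y) ^ 2 := pow_le_pow_left₀ hnn h2 2
  · -- negative k
    have hkneg : k ≤ -1 := by omega
    have hmk : (k.natAbs : ℝ) = -(k : ℝ) := by
      rw [habs, abs_of_neg (by exact_mod_cast (by omega : k < 0))]
    have hkR : (k : ℝ) ≤ -1 := by exact_mod_cast hkneg
    set z : ℝ := (-(k : ℝ) - lam) / a with hz
    have hz0 : 0 ≤ z := by apply div_nonneg (by linarith) haR.le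
    have hk4R : 2 * (-(k : ℝ)) ≤ (a : ℝ) := by exact_mod_cast (by omega : 2 * (-k) ≤ (a : ℤ))
    have hz12 : z ≤ 1 / 2 := by
      rw [hz, div_le_iff₀ haR]; linarith
    have hz1 : z ≤ 1 := by linarith
    have hj := two_mul_min_le_sin hz0 hz1
    have hminz : min z (1 - z) = z := min_eq_left (by linarith)
    rw [hminz] at hj
    have harg : π * ((k : ℝ) + lam) / (a : ℝ) = -(π * z) := by
      rw [hz]; field_simp; try ring
    have hsin : Real.sin (π * ((k : ℝ) + lam) / (a : ℝ)) ^ 2 = Real.sin (π * z) ^ 2 := by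
      rw [harg, Real.sin_neg, neg_sq]
    have h2 : 2 * ((-(k : ℝ) - 1) / a) ≤ Real.sin (π * z) := by
      have hle : (-(k : ℝ) - 1) / a ≤ z := by
        rw [hz]; exact div_le_div_of_nonneg_right (by linarith) haR.le
      linarith
    have hnn : 0 ≤ 2 * ((-(k : ℝ) - 1) / a) := by
      apply mul_nonneg (by norm_num) (div_nonneg (by linarith) haR.le)
    rw [hsin, hmk]
    calc 4 * (-(k : ℝ) - 1) ^ 2 / (a : ℝ) ^ 2 = (2 * ((-(k : ℝ) - 1) / a)) ^ 2 := by
          field_simp; ring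
      _ ≤ Real.sin (π * z) ^ 2 := pow_le_pow_left₀ hnn h2 2

/-- Reindexing a sum over `range a` to a symmetric window of integers,
for an `a`-periodic function. -/
private lemma sum_range_eq_sum_window (a : ℕ) (f : ℤ → ℝ)
    (hf : ∀ k : ℤ, f (k + (a : ℤ)) = f k) :
    ∑ j ∈ Finset.range a, f (j : ℤ) =
      ∑ k ∈ Finset.Ico (-((a / 2 : ℕ) : ℤ)) ((a - a / 2 : ℕ) : ℤ), f k := by
  have hunion : ∀ x y z : ℤ, x ≤ y → y ≤ z →
      ∑ k ∈ Finset.Ico x y, f k + ∑ k ∈ Finset.Ico y z, f k = ∑ k ∈ Finset.Ico x z, f k := by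
    intro x y z h1 h2
    rw [← Finset.Ico_union_Ico_eq_Ico h1 h2,
      Finset.sum_union (Finset.Ico_disjoint_Ico_consecutive x y z)]
  have h1 : ∑ j ∈ Finset.range a, f (j : ℤ) = ∑ k ∈ Finset.Ico (0 : ℤ) (a : ℤ), f k := by
    refine Finset.sum_nbij' (fun j => (j : ℤ)) (fun k => k.toNat) ?_ ?_ ?_ ?_ ?_
    · intro x hx; simp only [Finset.mem_range] at hx; simp only [Finset.mem_Ico]; omega
    · intro x hx; simp only [Finset.mem_Ico] at hx; simp only [Finset.mem_range]; omega
    · intro x _; beta_reduce; omega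
    · intro x hx; simp only [Finset.mem_Ico] at hx; beta_reduce; omega
    · intro x _; rfl
  have hshift : ∑ k ∈ Finset.Ico ((a - a / 2 : ℕ) : ℤ) (a : ℤ), f k
      = ∑ k ∈ Finset.Ico (-((a / 2 : ℕ) : ℤ)) 0, f k := by
    have hmap : Finset.Ico ((a - a / 2 : ℕ) : ℤ) (a : ℤ)
        = Finset.map (addRightEmbedding (a : ℤ)) (Finset.Ico (-((a / 2 : ℕ) : ℤ)) 0) := by
      rw [Finset.map_add_right_Ico]
      congr 1 <;> omega
    rw [hmap, Finset.sum_map]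
    refine Finset.sum_congr rfl fun k _ => ?_
    simpa using hf k
  rw [h1, ← hunion 0 ((a - a / 2 : ℕ) : ℤ) (a : ℤ) (by omega) (by omega), hshift,
    ← hunion (-((a / 2 : ℕ) : ℤ)) 0 ((a - a / 2 : ℕ) : ℤ) (by omega) (by omega)]
  ring

/-- The "windowed" summand. -/
private noncomputable def Fwin (t : ℝ) (a : ℕ) (lam : ℝ) (n : ℕ) (k : ℤ) : ℝ :=
  if k ∈ Finset.Ico (-((a / 2 : ℕ) : ℤ)) ((a - a / 2 : ℕ) : ℤ) then
    Real.exp (-4 * ((n : ℝ) ^ 2 * t) * Real.sin (π * ((k : ℝ) + lam) / (a : ℝ)) ^ 2)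
  else 0

/-- One-dimensional convergence of the rescaled theta function. -/
private lemma theta_onedim
    (a : ℕ → ℕ) (ha : ∀ n, 0 < a n) (α : ℝ) (hα : 0 < α)
    (haα : Tendsto (fun n : ℕ => (a n : ℝ) / n) atTop (nhds α))
    (lam : ℕ → ℝ) (hlam : ∀ n, lam n ∈ Set.Ico (0 : ℝ) 1)
    (Λ : ℝ) (hΛlim : Tendsto lam atTop (nhds Λ))
    (t : ℝ) (ht : 0 < t) :
    Tendsto (fun n : ℕ => ∑ j ∈ Finset.range (a n),
        Real.exp (-4 * ((n : ℝ) ^ 2 * t) * Real.sin (π * ((j : ℝ) + lam n) / (a n : ℝ)) ^ 2))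
      atTop (nhds (∑' k : ℤ, Real.exp (-4 * π ^ 2 * t * (((k : ℝ) + Λ) / α) ^ 2))) := by
  have haR : ∀ n, (0 : ℝ) < (a n : ℝ) := fun n => by exact_mod_cast ha n
  -- `a n → ∞`
  have hatop : Tendsto (fun n : ℕ => (a n : ℝ)) atTop atTop := by
    have h1 : Tendsto (fun n : ℕ => (a n : ℝ) / n * n) atTop atTop :=
      haα.pos_mul_atTop hα tendsto_natCast_atTop_atTop
    refine h1.congr' ?_
    filter_upwards [eventually_ge_atTop 1] with n hn
    have hn0 : (n : ℝ) ≠ 0 := Nat.cast_ne_zero.2 (by omega)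
    field_simp
  -- `n / a n → α⁻¹`
  have hinv : Tendsto (fun n : ℕ => (n : ℝ) / (a n : ℝ)) atTop (nhds α⁻¹) := by
    have h := haα.inv₀ hα.ne'
    exact h.congr fun n => inv_div _ _
  -- rewrite the finite sums as `tsum`s of windowed functions
  have key : ∀ n : ℕ, (∑ j ∈ Finset.range (a n),
      Real.exp (-4 * ((n : ℝ) ^ 2 * t) * Real.sin (π * ((j : ℝ) + lam n) / (a n : ℝ)) ^ 2))
      = ∑' k : ℤ, Fwin t (a n) (lam n) n k := by
    intro n
    set f : ℤ → ℝ := fun k =>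
      Real.exp (-4 * ((n : ℝ) ^ 2 * t) * Real.sin (π * ((k : ℝ) + lam n) / (a n : ℝ)) ^ 2)
      with hfdef
    have hper : ∀ k : ℤ, f (k + (a n : ℤ)) = f k := by
      intro k
      simp only [hfdef]
      have hsin : Real.sin (π * ((((k + (a n : ℤ) : ℤ)) : ℝ) + lam n) / (a n : ℝ)) ^ 2
          = Real.sin (π * ((k : ℝ) + lam n) / (a n : ℝ)) ^ 2 := by
        have harg : π * ((((k + (a n : ℤ) : ℤ)) : ℝ) + lam n) / (a n : ℝ)
            = π * ((k : ℝ) + lam n) / (a n : ℝ) + π := by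
          have han : (a n : ℝ) ≠ 0 := (haR n).ne'
          push_cast
          field_simp
          ring
        rw [harg, Real.sin_add_pi, neg_sq]
      rw [hsin]
    calc (∑ j ∈ Finset.range (a n),
          Real.exp (-4 * ((n : ℝ) ^ 2 * t) * Real.sin (π * ((j : ℝ) + lam n) / (a n : ℝ)) ^ 2))
        = ∑ j ∈ Finset.range (a n), f (j : ℤ) := by
          refine Finset.sum_congr rfl fun j _ => ?_
          simp only [hfdef, Int.cast_natCast]
      _ = ∑ k ∈ Finset.Ico (-((a n / 2 : ℕ) : ℤ)) ((a n - a n / 2 : ℕ) : ℤ), f k :=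
          sum_range_eq_sum_window (a n) f hper
      _ = ∑ k ∈ Finset.Ico (-((a n / 2 : ℕ) : ℤ)) ((a n - a n / 2 : ℕ) : ℤ),
            Fwin t (a n) (lam n) n k := by
          refine Finset.sum_congr rfl fun k hk => ?_
          simp only [Fwin, if_pos hk, hfdef]
      _ = ∑' k : ℤ, Fwin t (a n) (lam n) n k := by
          refine (tsum_eq_sum fun k hk => ?_).symm
          simp only [Fwin, if_neg hk]
  rw [show (fun n : ℕ => ∑ j ∈ Finset.range (a n),
      Real.exp (-4 * ((n : ℝ) ^ 2 * t) * Real.sin (π * ((j : ℝ) + lam n) / (a n : ℝ)) ^ 2))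
      = fun n : ℕ => ∑' k : ℤ, Fwin t (a n) (lam n) n k from funext key]
  -- dominated convergence
  have hbound_summable : Summable (fun k : ℤ =>
      Real.exp (4 * t / α ^ 2) * Real.exp (-(2 * t / α ^ 2) * (k : ℝ) ^ 2)) :=
    (summable_exp_neg_mul_sq (show (0 : ℝ) < 2 * t / α ^ 2 by positivity)).mul_left _
  -- pointwise convergence
  have hpoint : ∀ k : ℤ, Tendsto (fun n : ℕ => Fwin t (a n) (lam n) n k) atTop
      (nhds (Real.exp (-4 * π ^ 2 * t * (((k : ℝ) + Λ) / α) ^ 2))) := by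
    intro k
    set x : ℕ → ℝ := fun n => π * ((k : ℝ) + lam n) / (a n : ℝ) with hxdef
    set u : ℕ → ℝ := fun n => π * |(k : ℝ) + lam n| * ((n : ℝ) / (a n : ℝ)) with hudef
    have hueq : ∀ n, u n = (n : ℝ) * |x n| := by
      intro n
      have hx : |x n| = π * |(k : ℝ) + lam n| / (a n : ℝ) := by
        simp only [hxdef]
        rw [abs_div, abs_mul, abs_of_pos Real.pi_pos, abs_of_pos (haR n)]
      simp only [hudef, hx]
      ring
    have hx0 : Tendsto x atTop (nhds 0) := by
      have h1 : Tendsto (fun n : ℕ => π * ((k : ℝ) + lam n) * ((a n : ℝ))⁻¹) atTop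
          (nhds (π * ((k : ℝ) + Λ) * 0)) :=
        (((hΛlim.const_add ((k : ℝ))).const_mul π).mul hatop.inv_tendsto_atTop)
      rw [mul_zero] at h1
      refine h1.congr fun n => ?_
      simp only [hxdef]
      rw [div_eq_mul_inv]
    have hu : Tendsto u atTop (nhds (π * |(k : ℝ) + Λ| / α)) := by
      have h1 : Tendsto (fun n : ℕ => π * |(k : ℝ) + lam n| * ((n : ℝ) / (a n : ℝ))) atTop
          (nhds (π * |(k : ℝ) + Λ| * α⁻¹)) :=
        (((hΛlim.const_add ((k : ℝ))).abs.const_mul π).mul hinv)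
      rw [← div_eq_mul_inv] at h1
      exact h1
    -- squeeze for `n² sin² (x n)`
    have hxsmall : ∀ᶠ n in atTop, |x n| ≤ 1 := by
      have h := Metric.tendsto_nhds.mp hx0 1 one_pos
      filter_upwards [h] with n hn
      rw [Real.dist_eq, sub_zero] at hn
      exact hn.le
    have hsinsq : Tendsto (fun n : ℕ => (n : ℝ) ^ 2 * Real.sin (x n) ^ 2) atTop
        (nhds ((π * |(k : ℝ) + Λ| / α) ^ 2)) := by
      have hlowlim : Tendsto (fun n : ℕ => (u n * (1 - x n ^ 2 / 4)) ^ 2) atTop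
          (nhds ((π * |(k : ℝ) + Λ| / α) ^ 2)) := by
        have h1 : Tendsto (fun n : ℕ => 1 - x n ^ 2 / 4) atTop (nhds 1) := by
          have h2 := (hx0.pow 2).div_const 4
          have h3 := (tendsto_const_nhds (x := (1 : ℝ)) (f := atTop)).sub h2
          simpa using h3
        have := (hu.mul h1).pow 2
        simpa using this
      have hhighlim : Tendsto (fun n : ℕ => (u n) ^ 2) atTop
          (nhds ((π * |(k : ℝ) + Λ| / α) ^ 2)) := hu.pow 2
      refine tendsto_of_tendsto_of_tendsto_of_le_of_le' hlowlim hhighlim ?_ ?_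
      · filter_upwards [hxsmall] with n hn
        rw [hueq n, mul_assoc, mul_pow]
        exact mul_le_mul_of_nonneg_left (sq_sin_lower hn) (sq_nonneg _)
      · filter_upwards with n
        rw [hueq n, mul_pow, sq_abs]
        exact mul_le_mul_of_nonneg_left Real.sin_sq_le_sq (sq_nonneg _)
    -- limit of the exponent
    have hG : Tendsto (fun n : ℕ =>
        Real.exp (-4 * ((n : ℝ) ^ 2 * t) * Real.sin (x n) ^ 2)) atTop
        (nhds (Real.exp (-4 * π ^ 2 * t * (((k : ℝ) + Λ) / α) ^ 2))) := by
      have h1 := hsinsq.const_mul (-4 * t)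
      have heq : -4 * t * (π * |(k : ℝ) + Λ| / α) ^ 2
          = -4 * π ^ 2 * t * (((k : ℝ) + Λ) / α) ^ 2 := by
        rw [div_pow, mul_pow, sq_abs, div_pow]
        ring
      rw [heq] at h1
      have h2 : Tendsto (fun n : ℕ =>
          -4 * ((n : ℝ) ^ 2 * t) * Real.sin (x n) ^ 2) atTop
          (nhds (-4 * π ^ 2 * t * (((k : ℝ) + Λ) / α) ^ 2)) :=
        h1.congr fun n => by ring
      exact (Real.continuous_exp.tendsto _).comp h2
    -- `Fwin` eventually agrees with the function above
    have hev : ∀ᶠ n in atTop, k ∈ Finset.Ico (-((a n / 2 : ℕ) : ℤ)) ((a n - a n / 2 : ℕ) : ℤ) := by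
      filter_upwards [hatop.eventually_ge_atTop (2 * (k.natAbs : ℝ) + 2)] with n hn
      have h' : 2 * (k.natAbs : ℤ) + 2 ≤ (a n : ℤ) := by exact_mod_cast hn
      simp only [Finset.mem_Ico]
      omega
    refine hG.congr' ?_
    filter_upwards [hev] with n hn
    simp only [Fwin, if_pos hn, hxdef]
  -- the domination
  have hdom : ∀ᶠ n in atTop, ∀ k : ℤ, ‖Fwin t (a n) (lam n) n k‖
      ≤ Real.exp (4 * t / α ^ 2) * Real.exp (-(2 * t / α ^ 2) * (k : ℝ) ^ 2) := by
    filter_upwards [haα.eventually_lt_const (show α < 2 * α by linarith), eventually_ge_atTop 1]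
      with n hn2 hn1
    intro k
    by_cases hk : k ∈ Finset.Ico (-((a n / 2 : ℕ) : ℤ)) ((a n - a n / 2 : ℕ) : ℤ)
    · have hna : (a n : ℝ) ≤ 2 * α * (n : ℝ) := by
        have hnpos : (0 : ℝ) < (n : ℝ) := by exact_mod_cast (by omega : 0 < n)
        rw [div_lt_iff₀ hnpos] at hn2
        linarith
      set s := Real.sin (π * ((k : ℝ) + lam n) / (a n : ℝ)) ^ 2 with hsdef
      have hs0 : 0 ≤ s := sq_nonneg _
      have hkey : 2 * t / α ^ 2 * (k : ℝ) ^ 2 - 4 * t / α ^ 2 ≤ 4 * ((n : ℝ) ^ 2 * t) * s := by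
        rcases Nat.eq_zero_or_pos k.natAbs with hknat | hknat
        · have hk0 : (k : ℝ) = 0 := by exact_mod_cast Int.natAbs_eq_zero.1 hknat
          rw [hk0]
          have hpos1 : 0 ≤ 4 * ((n : ℝ) ^ 2 * t) * s := by positivity
          have hpos2 : 0 ≤ 4 * t / α ^ 2 := by positivity
          nlinarith
        · have hA := sin_sq_window_bound (a n) k (lam n) (hlam n) hk hknat
          rw [← hsdef] at hA
          set m : ℝ := (k.natAbs : ℝ) with hmdef
          have hm1 : (1 : ℝ) ≤ m := by
            have h1n : 1 ≤ k.natAbs := hknat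
            rw [hmdef]
            exact_mod_cast h1n
          have hmk : m ^ 2 = (k : ℝ) ^ 2 := by
            rw [hmdef, Nat.cast_natAbs, Int.cast_abs, sq_abs]
          have h2 : 4 * (m - 1) ^ 2 ≤ s * (a n : ℝ) ^ 2 := by
            have := (div_le_iff₀ (pow_pos (haR n) 2)).1 hA
            linarith
          have h3 : s * (a n : ℝ) ^ 2 ≤ s * (2 * α * (n : ℝ)) ^ 2 :=
            mul_le_mul_of_nonneg_left (pow_le_pow_left₀ (haR n).le hna 2) hs0
          have h4 : (m - 1) ^ 2 ≤ α ^ 2 * (n : ℝ) ^ 2 * s := by nlinarith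
          have h5 : 2 * (k : ℝ) ^ 2 - 4 ≤ 4 * ((m - 1) ^ 2) := by nlinarith [sq_nonneg (m - 2)]
          have hα2 : (0 : ℝ) < α ^ 2 := by positivity
          rw [div_mul_eq_mul_div, ← sub_div, div_le_iff₀ hα2]
          nlinarith [mul_le_mul_of_nonneg_left h4 (show (0 : ℝ) ≤ 4 * t by positivity)]
      simp only [Fwin, if_pos hk, ← hsdef]
      rw [Real.norm_eq_abs, abs_of_nonneg (Real.exp_pos _).le, ← Real.exp_add]
      apply Real.exp_le_exp.2
      nlinarith [hkey]
    · simp only [Fwin, if_neg hk]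
      rw [norm_zero]
      positivity
  exact tendsto_tsum_of_dominated_convergence hbound_summable hpoint hdom

/-- Summability of products over `Fin n → ℤ` of summable nonnegative factors. -/
private lemma summable_pi_prod : ∀ (n : ℕ) (f : Fin n → ℤ → ℝ), (∀ i k, 0 ≤ f i k) →
    (∀ i, Summable (f i)) → Summable (fun K : Fin n → ℤ => ∏ i, f i (K i)) := by
  intro n
  induction n with
  | zero =>
    intro f _ _
    exact Summable.of_finite
  | succ n ih =>
    intro f h0 hs
    rw [← Equiv.summable_iff (Fin.consEquiv fun _ : Fin (n + 1) => ℤ)]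
    have h1 : Summable fun k : ℤ => ‖f 0 k‖ :=
      (hs 0).congr fun k => (Real.norm_of_nonneg (h0 0 k)).symm
    have h2' := ih (fun i => f i.succ) (fun i k => h0 _ _) (fun i => hs _)
    have h2 : Summable fun K : Fin n → ℤ => ‖∏ i, f i.succ (K i)‖ :=
      h2'.congr fun K => (Real.norm_of_nonneg (Finset.prod_nonneg fun i _ => h0 _ _)).symm
    have h3 := summable_mul_of_summable_norm h1 h2
    refine h3.congr fun p => ?_
    simp [Fin.prod_univ_succ, Fin.consEquiv]

/-- Factorization of a `tsum` over `Fin n → ℤ` of a product. -/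
private lemma tsum_pi_prod : ∀ (n : ℕ) (f : Fin n → ℤ → ℝ), (∀ i k, 0 ≤ f i k) →
    (∀ i, Summable (f i)) →
    ∑' K : Fin n → ℤ, ∏ i, f i (K i) = ∏ i, ∑' k : ℤ, f i k := by
  intro n
  induction n with
  | zero =>
    intro f _ _
    simp only [Finset.univ_eq_empty, Finset.prod_empty]
    rw [tsum_eq_single (default : Fin 0 → ℤ)]
    intro b' hb'
    exact absurd (Subsingleton.elim b' default) hb'
  | succ n ih =>
    intro f h0 hs
    rw [← Equiv.tsum_eq (Fin.consEquiv fun _ : Fin (n + 1) => ℤ)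
      (fun K : Fin (n + 1) → ℤ => ∏ i, f i (K i))]
    have hstep : ∀ p : ℤ × (Fin n → ℤ),
        (∏ i, f i ((Fin.consEquiv fun _ : Fin (n + 1) => ℤ) p i))
          = f 0 p.1 * ∏ i : Fin n, f i.succ (p.2 i) := by
      intro p
      simp [Fin.prod_univ_succ, Fin.consEquiv]
    rw [tsum_congr hstep, Fin.prod_univ_succ]
    have h1 : Summable fun k : ℤ => ‖f 0 k‖ :=
      (hs 0).congr fun k => (Real.norm_of_nonneg (h0 0 k)).symm
    have h2 : Summable fun K : Fin n → ℤ => ‖∏ i, f i.succ (K i)‖ :=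
      (summable_pi_prod n (fun i => f i.succ) (fun i k => h0 _ _) (fun i => hs _)).congr
        fun K => (Real.norm_of_nonneg (Finset.prod_nonneg fun i _ => h0 _ _)).symm
    rw [← tsum_mul_tsum_of_summable_norm h1 h2,
      ih (fun i => f i.succ) (fun i k => h0 _ _) (fun i => hs _)]

/-- The rescaled theta function of the twisted discrete torus converges to the theta
function of the twisted continuous torus: `lim_{n→∞} θ^{G_n}(n²t) = θ^∞(t)`. -/
theorem rescaled_theta_convergence
    (d : ℕ) (hd : 1 ≤ d)
    (a : Fin d → ℕ → ℕ) (ha : ∀ i n, 0 < a i n)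
    (α : Fin d → ℝ) (hα : ∀ i, 0 < α i)
    (haα : ∀ i, Filter.Tendsto (fun n : ℕ => (a i n : ℝ) / (n : ℝ)) Filter.atTop (nhds (α i)))
    (lam : Fin d → ℕ → ℝ) (hlam : ∀ i n, lam i n ∈ Set.Ico (0 : ℝ) 1)
    (Λ : Fin d → ℝ) (hΛlim : ∀ i, Filter.Tendsto (lam i) Filter.atTop (nhds (Λ i)))
    (hΛ : ∀ i, Λ i ∈ Set.Icc (0 : ℝ) 1)
    (h0 : ∃ i, Λ i ≠ 0 ∧ Λ i ≠ 1)
    (t : ℝ) (ht : 0 < t) :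
    Filter.Tendsto (fun n : ℕ =>
        ∏ i, ∑ j ∈ Finset.range (a i n),
          Real.exp (-4 * ((n : ℝ) ^ 2 * t) *
            Real.sin (π * ((j : ℝ) + lam i n) / (a i n : ℝ)) ^ 2))
      Filter.atTop
      (nhds (∑' K : Fin d → ℤ,
        Real.exp (-4 * π ^ 2 * t * ∑ i, (((K i : ℝ) + Λ i) / α i) ^ 2))) := by
  classical
  -- summability of each factor of the limit
  have hsummable : ∀ i, Summable fun k : ℤ =>
      Real.exp (-4 * π ^ 2 * t * (((k : ℝ) + Λ i) / α i) ^ 2) := by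
    intro i
    have hαi : 0 < α i := hα i
    have hb := (summable_exp_neg_mul_sq
      (show (0 : ℝ) < 2 * π ^ 2 * t / (α i) ^ 2 by positivity)).mul_left
      (Real.exp (4 * π ^ 2 * t / (α i) ^ 2))
    refine Summable.of_nonneg_of_le (fun k => (Real.exp_pos _).le) (fun k => ?_) hb
    rw [← Real.exp_add]
    apply Real.exp_le_exp.2
    have h1 : ((k : ℝ) + Λ i) ^ 2 ≥ (k : ℝ) ^ 2 / 2 - 1 := by
      nlinarith [sq_nonneg ((k : ℝ) + 2 * Λ i), (hΛ i).1, (hΛ i).2, sq_nonneg (Λ i)]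
    have hα2 : (0 : ℝ) < (α i) ^ 2 := by positivity
    have key : -4 * π ^ 2 * t * (((k : ℝ) + Λ i) / (α i)) ^ 2
        = (-4 * π ^ 2 * t * ((k : ℝ) + Λ i) ^ 2) / (α i) ^ 2 := by
      rw [div_pow]; ring
    have key2 : 4 * π ^ 2 * t / (α i) ^ 2 + -(2 * π ^ 2 * t / (α i) ^ 2) * (k : ℝ) ^ 2
        = (4 * π ^ 2 * t - 2 * π ^ 2 * t * (k : ℝ) ^ 2) / (α i) ^ 2 := by ring
    rw [key, key2, div_le_div_iff_of_pos_right hα2]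
    have hA : (0 : ℝ) < 4 * π ^ 2 * t := by positivity
    nlinarith [mul_le_mul_of_nonneg_left (show (k : ℝ) ^ 2 / 2 - 1 ≤ ((k : ℝ) + Λ i) ^ 2 from h1)
      hA.le]
  -- one-dimensional limits
  have h1 : ∀ i, Tendsto (fun n : ℕ => ∑ j ∈ Finset.range (a i n),
      Real.exp (-4 * ((n : ℝ) ^ 2 * t) * Real.sin (π * ((j : ℝ) + lam i n) / (a i n : ℝ)) ^ 2))
      atTop (nhds (∑' k : ℤ, Real.exp (-4 * π ^ 2 * t * (((k : ℝ) + Λ i) / α i) ^ 2))) :=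
    fun i => theta_onedim (a i) (ha i) (α i) (hα i) (haα i) (lam i) (hlam i) (Λ i) (hΛlim i) t ht
  have h2 := tendsto_finset_prod (f := fun i (n : ℕ) => ∑ j ∈ Finset.range (a i n),
      Real.exp (-4 * ((n : ℝ) ^ 2 * t) * Real.sin (π * ((j : ℝ) + lam i n) / (a i n : ℝ)) ^ 2))
    (Finset.univ : Finset (Fin d)) (fun i _ => h1 i)
  -- rewrite the target tsum as a product of tsums
  have hre : (∑' K : Fin d → ℤ,
      Real.exp (-4 * π ^ 2 * t * ∑ i, (((K i : ℝ) + Λ i) / α i) ^ 2))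
      = ∏ i, ∑' k : ℤ, Real.exp (-4 * π ^ 2 * t * (((k : ℝ) + Λ i) / α i) ^ 2) := by
    rw [← tsum_pi_prod d (fun i k => Real.exp (-4 * π ^ 2 * t * (((k : ℝ) + Λ i) / α i) ^ 2))
      (fun i k => (Real.exp_pos _).le) hsummable]
    refine tsum_congr fun K => ?_
    rw [← Real.exp_sum]
    congr 1
    rw [Finset.mul_sum]
  rw [hre]
  exact h2
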